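/- Let a ≠ b be nonnegative constants and ρ → 0. Then the Rényi divergence of order 1/2 between Ber(aρ) and Ber(bρ) satisfies I(aρ, bρ) = (√a − √b)² ρ + O(ρ²). Formally: there exist constans C, ρ₀ > 0 such that |I(aρ,bρ) − (√a−√b)²ρ| ≤ Cρ² for all 0 < ρ ≤ ρ₀. -/

import Mathlib

/-- Twice the Rényi divergence of order 1/2 between `Ber(p)` and `Ber(q)`:
`I(p,q) = −2 log((1−p)^{1/2}(1−q)^{1/2} + p^{1/2}q^{1/2})`. -/
noncomputable def renyiBer (p q : ℝ) : ℝ :=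
  -2 * Real.log (Real.sqrt (1 - p) * Real.sqrt (1 - q) + Real.sqrt p * Real.sqrt q)

lemma sqrt_one_sub_le {t : ℝ} (h1 : t ≤ 1) :
    Real.sqrt (1 - t) ≤ 1 - t / 2 := by
  have heq : (1:ℝ) - t / 2 = Real.sqrt ((1 - t / 2) ^ 2) := (Real.sqrt_sq (by linarith)).symm
  rw [heq]
  exact Real.sqrt_le_sqrt (by nlinarith [sq_nonneg t])

lemma le_sqrt_one_sub {t : ℝ} (h0 : 0 ≤ t) (h1 : t ≤ 1) :
    1 - t / 2 - t ^ 2 / 2 ≤ Real.sqrt (1 - t) := by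
  rcases le_or_gt (1 - t / 2 - t ^ 2 / 2) 0 with h | h
  · exact h.trans (Real.sqrt_nonneg _)
  · have heq : (1:ℝ) - t / 2 - t ^ 2 / 2 = Real.sqrt ((1 - t / 2 - t ^ 2 / 2) ^ 2) :=
      (Real.sqrt_sq h.le).symm
    rw [heq]
    apply Real.sqrt_le_sqrt
    nlinarith [sq_nonneg t, sq_nonneg (t * (1 - t))]

lemma abs_log_one_add_sub {u : ℝ} (hu : |u| ≤ 1/2) : |Real.log (1 + u) - u| ≤ 2 * u ^ 2 := by
  have h : |(-u)| < 1 := by rw [abs_neg]; linarith [abs_nonneg u]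
  have key := Real.abs_log_sub_add_sum_range_le h 1
  simp only [Finset.sum_range_one, pow_one, Nat.cast_zero, zero_add, div_one] at key
  have h2 : (1:ℝ) - -u = 1 + u := by ring
  rw [h2] at key
  have h3 : |(-u)| ^ 2 / (1 - |(-u)|) ≤ 2 * u ^ 2 := by
    rw [abs_neg, sq_abs]
    have h4 : (1:ℝ)/2 ≤ 1 - |u| := by linarith
    have h5 : u ^ 2 / (1 - |u|) ≤ u ^ 2 / (1/2) :=
      div_le_div_of_nonneg_left (sq_nonneg u) (by linarith) h4
    linarith
  calc |Real.log (1 + u) - u| = |(-u) + Real.log (1 + u)| := by congr 1; ring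
    _ ≤ |(-u)| ^ 2 / (1 - |(-u)|) := key
    _ ≤ 2 * u ^ 2 := h3

set_option maxHeartbeats 1000000 in
/-- For fixed `a ≠ b ≥ 0`, `I(aρ, bρ) = (√a − √b)² ρ + O(ρ²)` as `ρ → 0`. -/
theorem stmt5 (a b : ℝ) (ha : 0 ≤ a) (hb : 0 ≤ b) (hab : a ≠ b) :
    ∃ C ρ₀ : ℝ, 0 < C ∧ 0 < ρ₀ ∧ ∀ ρ : ℝ, 0 < ρ → ρ ≤ ρ₀ →
      |renyiBer (a * ρ) (b * ρ) - (Real.sqrt a - Real.sqrt b) ^ 2 * ρ| ≤ C * ρ ^ 2 := by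
  refine ⟨6 * (a + b + 1) ^ 2, 1 / (8 * (a + b + 1) ^ 2), by positivity, by positivity, ?_⟩
  intro ρ hρ hρ₀
  obtain ⟨M, hM⟩ : ∃ M : ℝ, M = a + b + 1 := ⟨_, rfl⟩
  rw [← hM] at hρ₀ ⊢
  have hM1 : 1 ≤ M := by rw [hM]; linarith only [ha, hb]
  have hM0 : 0 < M := by linarith only [hM1]
  have hMsq1 : 1 ≤ M ^ 2 := by nlinarith only [hM1]
  have hρ1 : ρ ≤ 1 := by
    have h8 : 1 / (8 * M ^ 2) ≤ 1 := by
      rw [div_le_one (by positivity)]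
      linarith only [hMsq1]
    linarith only [hρ₀, h8]
  -- basic bounds
  have haM : a ≤ M := by rw [hM]; linarith only [hb]
  have hbM : b ≤ M := by rw [hM]; linarith only [ha]
  have habM : a * b ≤ M ^ 2 := by nlinarith only [haM, hbM, ha, hb]
  have hMρ : M ^ 2 * ρ ≤ 1 / 8 := by
    have h1 := mul_le_mul_of_nonneg_left hρ₀ (le_of_lt (by positivity : (0:ℝ) < M ^ 2))
    have h2 : M ^ 2 * (1 / (8 * M ^ 2)) = 1 / 8 := by field_simp
    linarith only [h1, h2]
  have hMρ' : M * ρ ≤ 1 / 8 := by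
    have h1 : M ≤ M ^ 2 := by nlinarith only [hM1]
    have h2 := mul_le_mul_of_nonneg_right h1 hρ.le
    linarith only [h2, hMρ]
  have haρ : a * ρ ≤ 1 := by
    have h1 := mul_le_mul_of_nonneg_right haM hρ.le
    linarith only [h1, hMρ']
  have hbρ : b * ρ ≤ 1 := by
    have h1 := mul_le_mul_of_nonneg_right hbM hρ.le
    linarith only [h1, hMρ']
  -- t
  obtain ⟨t, ht⟩ : ∃ t : ℝ, t = (a + b) * ρ - a * b * ρ ^ 2 := ⟨_, rfl⟩
  have habρ : a * b * ρ ≤ (a + b) / 8 := by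
    have h1 : a * b ≤ (a + b) * M := by nlinarith only [haM, hbM, ha, hb, hM0]
    have h2 := mul_le_mul_of_nonneg_right h1 hρ.le
    nlinarith only [h2, hMρ', add_nonneg ha hb]
  have ht0 : 0 ≤ t := by
    rw [ht]
    have h1 := mul_le_mul_of_nonneg_right habρ hρ.le
    nlinarith only [h1, mul_nonneg (add_nonneg ha hb) hρ.le]
  have htub : t ≤ (a + b) * ρ := by
    rw [ht]
    nlinarith only [mul_nonneg (mul_nonneg ha hb) (sq_nonneg ρ)]
  have htMρ : t ≤ M * ρ := by
    have hab' : a + b ≤ M := by rw [hM]; linarith only []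
    have h1 := mul_le_mul_of_nonneg_right hab' hρ.le
    linarith only [htub, h1]
  have ht1 : t ≤ 1 := by linarith only [htMρ, hMρ']
  -- rewrite the sqrt products
  obtain ⟨g, hg⟩ : ∃ g : ℝ, g = Real.sqrt a * Real.sqrt b := ⟨_, rfl⟩
  have hρsq : Real.sqrt ρ * Real.sqrt ρ = ρ := Real.mul_self_sqrt hρ.le
  have hprod : Real.sqrt (a * ρ) * Real.sqrt (b * ρ) = g * ρ := by
    rw [Real.sqrt_mul ha, Real.sqrt_mul hb, hg,
      show Real.sqrt a * Real.sqrt ρ * (Real.sqrt b * Real.sqrt ρ)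
        = Real.sqrt a * Real.sqrt b * (Real.sqrt ρ * Real.sqrt ρ) from by ring, hρsq]
  have hprod2 : Real.sqrt (1 - a * ρ) * Real.sqrt (1 - b * ρ) = Real.sqrt (1 - t) := by
    rw [← Real.sqrt_mul (by linarith only [haρ])]
    congr 1; rw [ht]; ring
  have hg0 : 0 ≤ g := hg ▸ mul_nonneg (Real.sqrt_nonneg a) (Real.sqrt_nonneg b)
  have hgab : 2 * g ≤ a + b := by
    rw [hg]
    nlinarith only [sq_nonneg (Real.sqrt a - Real.sqrt b), Real.sq_sqrt ha, Real.sq_sqrt hb]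
  obtain ⟨c, hc⟩ : ∃ c : ℝ, c = a + b - 2 * g := ⟨_, rfl⟩
  have hc0 : 0 ≤ c := by rw [hc]; linarith only [hgab]
  have hcM : c ≤ M := by rw [hc, hM]; linarith only [hg0]
  have hcexp : (Real.sqrt a - Real.sqrt b) ^ 2 = c := by
    rw [hc, hg, sub_sq, Real.sq_sqrt ha, Real.sq_sqrt hb]; ring
  -- u = s - 1
  obtain ⟨u, hu⟩ : ∃ u : ℝ, u = Real.sqrt (1 - t) - 1 + g * ρ := ⟨_, rfl⟩
  have hsq_ub := sqrt_one_sub_le ht1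
  have hsq_lb := le_sqrt_one_sub ht0 ht1
  have hkey1 : -t / 2 + g * ρ = -(c * ρ) / 2 + a * b * ρ ^ 2 / 2 := by
    rw [ht, hc]; ring
  have hab2 : a * b * ρ ^ 2 / 2 ≤ M ^ 2 * ρ ^ 2 := by
    have h1 := mul_le_mul_of_nonneg_right habM (sq_nonneg ρ)
    have h2 : (0:ℝ) ≤ M ^ 2 * ρ ^ 2 := by positivity
    linarith only [h1, h2]
  have hab3 : 0 ≤ a * b * ρ ^ 2 / 2 := by positivity
  have ht2 : t ^ 2 / 2 ≤ M ^ 2 * ρ ^ 2 := by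
    have h2 := mul_self_le_mul_self ht0 htMρ
    nlinarith only [h2]
  have hu_ub : u ≤ -(c * ρ) / 2 + M ^ 2 * ρ ^ 2 := by
    have h1 : u ≤ -t / 2 + g * ρ := by rw [hu]; linarith only [hsq_ub]
    rw [hkey1] at h1
    linarith only [h1, hab2]
  have hu_lb : -(c * ρ) / 2 - M ^ 2 * ρ ^ 2 ≤ u := by
    have h1 : -t / 2 + g * ρ - t ^ 2 / 2 ≤ u := by rw [hu]; linarith only [hsq_lb]
    rw [hkey1] at h1
    linarith only [h1, hab3, ht2]
  have hucρ : |u + c * ρ / 2| ≤ M ^ 2 * ρ ^ 2 := by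
    rw [abs_le]
    constructor <;> linarith only [hu_ub, hu_lb]
  have hcρ : c * ρ ≤ M * ρ := mul_le_mul_of_nonneg_right hcM hρ.le
  have hcρ0 : 0 ≤ c * ρ := mul_nonneg hc0 hρ.le
  have hM2ρ2 : M ^ 2 * ρ ^ 2 ≤ M * ρ / 4 := by
    have h1 := mul_le_mul_of_nonneg_right hMρ' (mul_nonneg hM0.le hρ.le)
    nlinarith only [h1, mul_nonneg hM0.le hρ.le]
  have huabs : |u| ≤ M * ρ := by
    rw [abs_le]
    constructor <;> linarith only [hu_ub, hu_lb, hcρ, hcρ0, hM2ρ2]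
  have huhalf : |u| ≤ 1 / 2 := by linarith only [huabs, hMρ']
  -- the argument of log
  have hs : Real.sqrt (1 - a * ρ) * Real.sqrt (1 - b * ρ) +
      Real.sqrt (a * ρ) * Real.sqrt (b * ρ) = 1 + u := by
    rw [hprod, hprod2, hu]; ring
  have hlog := abs_log_one_add_sub huhalf
  have hu2 : u ^ 2 ≤ M ^ 2 * ρ ^ 2 := by
    have h1 := mul_self_le_mul_self (abs_nonneg u) huabs
    nlinarith only [h1, sq_abs u]
  -- conclude
  simp only [renyiBer]
  rw [hs, hcexp]
  have key : |Real.log (1 + u) + c * ρ / 2| ≤ 3 * M ^ 2 * ρ ^ 2 := by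
    calc |Real.log (1 + u) + c * ρ / 2|
        = |(Real.log (1 + u) - u) + (u + c * ρ / 2)| := by congr 1; ring
      _ ≤ |Real.log (1 + u) - u| + |u + c * ρ / 2| := abs_add_le _ _
      _ ≤ 2 * u ^ 2 + M ^ 2 * ρ ^ 2 := add_le_add hlog hucρ
      _ ≤ 3 * M ^ 2 * ρ ^ 2 := by linarith only [hu2]
  have hre : (-2 : ℝ) * Real.log (1 + u) - c * ρ = -2 * (Real.log (1 + u) + c * ρ / 2) := by
    ring
  rw [hre, abs_mul, show |(-2 : ℝ)| = 2 from by norm_num]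
  linarith only [key]
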